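/- Let a₁, a₂, a₃, a₄, a₅ ∈ ℂ be all nonzero and α, β, γ ∈ ℂ. If all nine quadrics Q₀, Q₁, Q₂, Q₀′, Q₁′, Q₂′, Q₀″, Q₁″, Q₂″ vanish at the point (x₀,…,x₅) = (0, a₁, a₂, a₃, a₄, a₅), then a₂a₄ + a₅a₁ ≠ 0, a₂a₄ − a₅a₁ ≠ 0, and the constants are given by α = −a₃²/(a₂a₄ + a₅a₁), β = a₃²/(a₂a₄ − a₅a₁), γ = −a₃a₄/(a₂a₅). -/
import Mathlib


open MvPolynomial

noncomputable section

abbrev R6 : Type := MvPolynomial (Fin 6) ℂ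

def Q0 (α : ℂ) : R6 := X 0 ^ 2 + X 3 ^ 2 + C α * (X 2 * X 4 + X 5 * X 1)
def Q1 (α : ℂ) : R6 := X 1 ^ 2 + X 4 ^ 2 + C α * (X 3 * X 5 + X 0 * X 2)
def Q2 (α : ℂ) : R6 := X 2 ^ 2 + X 5 ^ 2 + C α * (X 4 * X 0 + X 1 * X 3)
def Q0' (β : ℂ) : R6 := X 0 ^ 2 - X 3 ^ 2 + C β * (X 2 * X 4 - X 5 * X 1)
def Q1' (β : ℂ) : R6 := X 1 ^ 2 - X 4 ^ 2 + C β * (X 3 * X 5 - X 0 * X 2)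
def Q2' (β : ℂ) : R6 := X 2 ^ 2 - X 5 ^ 2 + C β * (X 4 * X 0 - X 1 * X 3)
def Q0'' (γ : ℂ) : R6 := X 0 * X 1 + X 3 * X 4 + C γ * (X 2 * X 5)
def Q1'' (γ : ℂ) : R6 := X 1 * X 2 + X 4 * X 5 + C γ * (X 3 * X 0)
def Q2'' (γ : ℂ) : R6 := X 2 * X 3 + X 5 * X 0 + C γ * (X 4 * X 1)

/-- If the nine quadrics all vanish at `(0, a₁, a₂, a₃, a₄, a₅)` with all `aᵢ ≠ 0`, then
`a₂a₄ + a₅a₁ ≠ 0`, `a₂a₄ − a₅a₁ ≠ 0`, and `α = −a₃²/(a₂a₄+a₅a₁)`, `β = a₃²/(a₂a₄−a₅a₁)`, `γ = −a₃a₄/(a₂a₅)`. -/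
theorem values_of_constants (a₁ a₂ a₃ a₄ a₅ : ℂ)
    (h₁ : a₁ ≠ 0) (h₂ : a₂ ≠ 0) (h₃ : a₃ ≠ 0) (h₄ : a₄ ≠ 0) (h₅ : a₅ ≠ 0)
    (α β γ : ℂ)
    (hQ0 : eval ![0, a₁, a₂, a₃, a₄, a₅] (Q0 α) = 0)
    (hQ1 : eval ![0, a₁, a₂, a₃, a₄, a₅] (Q1 α) = 0)
    (hQ2 : eval ![0, a₁, a₂, a₃, a₄, a₅] (Q2 α) = 0)
    (hQ0' : eval ![0, a₁, a₂, a₃, a₄, a₅] (Q0' β) = 0)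
    (hQ1' : eval ![0, a₁, a₂, a₃, a₄, a₅] (Q1' β) = 0)
    (hQ2' : eval ![0, a₁, a₂, a₃, a₄, a₅] (Q2' β) = 0)
    (hQ0'' : eval ![0, a₁, a₂, a₃, a₄, a₅] (Q0'' γ) = 0)
    (hQ1'' : eval ![0, a₁, a₂, a₃, a₄, a₅] (Q1'' γ) = 0)
    (hQ2'' : eval ![0, a₁, a₂, a₃, a₄, a₅] (Q2'' γ) = 0) :
    a₂ * a₄ + a₅ * a₁ ≠ 0 ∧ a₂ * a₄ - a₅ * a₁ ≠ 0 ∧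
    α = -a₃ ^ 2 / (a₂ * a₄ + a₅ * a₁) ∧
    β = a₃ ^ 2 / (a₂ * a₄ - a₅ * a₁) ∧
    γ = -(a₃ * a₄) / (a₂ * a₅) := by

  have e2 : (![0, a₁, a₂, a₃, a₄, a₅] : Fin 6 → ℂ) 2 = a₂ := rfl
  have e3 : (![0, a₁, a₂, a₃, a₄, a₅] : Fin 6 → ℂ) 3 = a₃ := rfl
  have e4 : (![0, a₁, a₂, a₃, a₄, a₅] : Fin 6 → ℂ) 4 = a₄ := rfl
  have e5 : (![0, a₁, a₂, a₃, a₄, a₅] : Fin 6 → ℂ) 5 = a₅ := rfl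
  simp only [Q0, Q0', Q0'', map_add, map_sub, map_mul, map_pow, eval_C, eval_X,
    Matrix.cons_val_zero, Matrix.cons_val_one, Matrix.head_cons,
    e2, e3, e4, e5] at hQ0 hQ0' hQ0''
  have hp : a₂ * a₄ + a₅ * a₁ ≠ 0 := by
    intro h
    rw [h, mul_zero, add_zero] at hQ0
    exact h₃ (pow_eq_zero_iff two_ne_zero |>.mp (by linear_combination hQ0))
  have hm : a₂ * a₄ - a₅ * a₁ ≠ 0 := by
    intro h
    rw [h, mul_zero, add_zero] at hQ0'
    exact h₃ (pow_eq_zero_iff two_ne_zero |>.mp (by linear_combination -hQ0'))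
  refine ⟨hp, hm, ?_, ?_, ?_⟩
  · field_simp
    linear_combination hQ0
  · field_simp
    linear_combination hQ0'
  · field_simp
    linear_combination hQ0''
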